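/- Let G be a context-free grammar in Chomsky normal form with N nonterminals, and let w be a word generated by G. Then there exists a word w' generated by G such that w' is a scattered subword of w and |w'| ≤ 2^N. -/
import Mathlib

namespace CnfSmallSubword

open ContextFreeGrammar

/-- Binary parse trees for a grammar in Chomsky normal form. -/
inductive PT (T V : Type*) : Type _
  | leaf (A : V) (a : T)
  | eps (A : V)
  | node (A : V) (l r : PT T V)

namespace PT

variable {T V : Type*}

def root : PT T V → V
  | leaf A _ => A
  | eps A => A
  | node A _ _ => A

def yield : PT T V → List T
  | leaf _ a => [a]
  | eps _ => []
  | node _ l r => yield l ++ yield r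

def size : PT T V → ℕ
  | leaf _ _ => 1
  | eps _ => 1
  | node _ l r => size l + size r + 1

def nts : PT T V → Set V
  | leaf A _ => {A}
  | eps A => {A}
  | node A l r => {A} ∪ nts l ∪ nts r

lemma root_mem_nts (t : PT T V) : t.root ∈ t.nts := by
  cases t <;> simp [root, nts]

/-- Along every root-to-leaf path all nonterminals are distinct and avoid `F`. -/
def Dist [DecidableEq V] : Finset V → PT T V → Prop
  | F, leaf A _ => A ∉ F
  | F, eps A => A ∉ F
  | F, node A l r => A ∉ F ∧ Dist (insert A F) l ∧ Dist (insert A F) r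

lemma dist_insert [DecidableEq V] {A : V} :
    ∀ (t : PT T V) (F : Finset V), A ∉ t.nts → Dist F t → Dist (insert A F) t := by
  intro t
  induction t with
  | leaf B a =>
      intro F hA hD
      simp only [nts, Set.mem_singleton_iff] at hA
      simp only [Dist] at hD ⊢
      intro hmem
      rcases Finset.mem_insert.mp hmem with h | h
      · exact hA h.symm
      · exact hD h
  | eps B =>
      intro F hA hD
      simp only [nts, Set.mem_singleton_iff] at hA
      simp only [Dist] at hD ⊢
      intro hmem
      rcases Finset.mem_insert.mp hmem with h | h
      · exact hA h.symm
      · exact hD h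
  | node B l r ihl ihr =>
      intro F hA hD
      simp only [nts, Set.mem_union, Set.mem_singleton_iff, not_or] at hA
      obtain ⟨⟨hAB, hAl⟩, hAr⟩ := hA
      obtain ⟨hB, hDl, hDr⟩ := hD
      refine ⟨?_, ?_, ?_⟩
      · intro hmem
        rcases Finset.mem_insert.mp hmem with h | h
        · exact hAB h.symm
        · exact hB h
      · rw [Finset.insert_comm]; exact ihl _ hAl hDl
      · rw [Finset.insert_comm]; exact ihr _ hAr hDr

lemma yield_length_le [DecidableEq V] [Fintype V] :
    ∀ (t : PT T V) (F : Finset V), Dist F t →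
      t.yield.length ≤ 2 ^ (Fintype.card V - F.card) := by
  intro t
  induction t with
  | leaf A a => intro F _; simpa [yield] using Nat.one_le_two_pow
  | eps A => intro F _; simp [yield]
  | node A l r ihl ihr =>
      intro F hD
      obtain ⟨hA, hDl, hDr⟩ := hD
      have hins : (insert A F).card = F.card + 1 := Finset.card_insert_of_notMem hA
      have hle : F.card + 1 ≤ Fintype.card V := hins ▸ Finset.card_le_univ _
      have h1 := ihl _ hDl
      have h2 := ihr _ hDr
      rw [hins] at h1 h2
      have hpow : 2 ^ (Fintype.card V - (F.card + 1)) + 2 ^ (Fintype.card V - (F.card + 1))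
          = 2 ^ (Fintype.card V - F.card) := by
        have : Fintype.card V - F.card = (Fintype.card V - (F.card + 1)) + 1 := by omega
        rw [this, pow_succ]; ring
      calc (node A l r).yield.length = l.yield.length + r.yield.length := by
            simp [yield]
        _ ≤ 2 ^ (Fintype.card V - (F.card + 1)) + 2 ^ (Fintype.card V - (F.card + 1)) :=
            Nat.add_le_add h1 h2
        _ = 2 ^ (Fintype.card V - F.card) := hpow

/-- Reflexive-transitive subtree relation. -/
inductive Subt : PT T V → PT T V → Prop
  | refl (t : PT T V) : Subt t t
  | left {s l : PT T V} (A : V) (r : PT T V) : Subt s l → Subt s (node A l r)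
  | right {s r : PT T V} (A : V) (l : PT T V) : Subt s r → Subt s (node A l r)

lemma nts_left_subset (A : V) (l r : PT T V) : l.nts ⊆ (node A l r).nts := by
  intro x hx
  simp only [nts, Set.mem_union]
  exact Or.inl (Or.inr hx)

lemma nts_right_subset (A : V) (l r : PT T V) : r.nts ⊆ (node A l r).nts := by
  intro x hx
  simp only [nts, Set.mem_union]
  exact Or.inr hx

lemma Subt.yield_sublist {s t : PT T V} (h : Subt s t) : s.yield.Sublist t.yield := by
  induction h with
  | refl => exact List.Sublist.refl _
  | left A r _ ih => exact ih.trans (by simp only [yield]; exact List.sublist_append_left _ _)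
  | right A l _ ih => exact ih.trans (by simp only [yield]; exact List.sublist_append_right _ _)

lemma Subt.size_le {s t : PT T V} (h : Subt s t) : s.size ≤ t.size := by
  induction h with
  | refl => exact le_rfl
  | left A r _ ih => simp only [size]; omega
  | right A l _ ih => simp only [size]; omega

lemma Subt.nts_subset {s t : PT T V} (h : Subt s t) : s.nts ⊆ t.nts := by
  induction h with
  | refl => exact subset_rfl
  | left A r _ ih => exact ih.trans (nts_left_subset A _ r)
  | right A l _ ih => exact ih.trans (nts_right_subset A l _)

lemma mem_nts_iff_subt {A : V} : ∀ {t : PT T V}, A ∈ t.nts → ∃ s, Subt s t ∧ s.root = A := by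
  intro t
  induction t with
  | leaf B a => intro h; exact ⟨leaf B a, Subt.refl _, by simpa [nts, root] using h.symm⟩
  | eps B => intro h; exact ⟨eps B, Subt.refl _, by simpa [nts, root] using h.symm⟩
  | node B l r ihl ihr =>
      intro h
      simp only [nts, Set.mem_union, Set.mem_singleton_iff] at h
      rcases h with (h | h) | h
      · exact ⟨node B l r, Subt.refl _, by simpa [root] using h.symm⟩
      · obtain ⟨s, hs, hr⟩ := ihl h; exact ⟨s, Subt.left _ _ hs, hr⟩
      · obtain ⟨s, hs, hr⟩ := ihr h; exact ⟨s, Subt.right _ _ hs, hr⟩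

end PT

variable {T : Type} {g : ContextFreeGrammar T}

open PT

/-- Validity of a parse tree w.r.t. the rules of `g`. -/
def Valid (g : ContextFreeGrammar T) : PT T g.NT → Prop
  | .leaf A a => (⟨A, [Symbol.terminal a]⟩ : ContextFreeRule T g.NT) ∈ g.rules
  | .eps A => (⟨A, ([] : List (Symbol T g.NT))⟩ : ContextFreeRule T g.NT) ∈ g.rules
  | .node A l r =>
      (⟨A, [Symbol.nonterminal l.root, Symbol.nonterminal r.root]⟩ :
        ContextFreeRule T g.NT) ∈ g.rules ∧ Valid g l ∧ Valid g r

lemma subt_valid {s t : PT T g.NT} (h : Subt s t) (hv : Valid g t) : Valid g s := by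
  induction h with
  | refl => exact hv
  | left A r _ ih => exact ih hv.2.1
  | right A l _ ih => exact ih hv.2.2

lemma valid_derives : ∀ t : PT T g.NT, Valid g t →
    g.Derives [Symbol.nonterminal t.root] (t.yield.map Symbol.terminal) := by
  intro t
  induction t with
  | leaf A a =>
      intro hv
      exact Produces.single ⟨_, hv, ContextFreeRule.Rewrites.input_output⟩
  | eps A =>
      intro hv
      exact Produces.single ⟨_, hv, ContextFreeRule.Rewrites.input_output⟩
  | node A l r ihl ihr =>
      intro hv
      obtain ⟨hrule, hvl, hvr⟩ := hv
      have step : g.Produces [Symbol.nonterminal A]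
          [Symbol.nonterminal l.root, Symbol.nonterminal r.root] :=
        ⟨_, hrule, ContextFreeRule.Rewrites.input_output⟩
      have d1 : g.Derives [Symbol.nonterminal l.root, Symbol.nonterminal r.root]
          (l.yield.map Symbol.terminal ++ [Symbol.nonterminal r.root]) := by
        simpa using (ihl hvl).append_right [Symbol.nonterminal r.root]
      have d2 : g.Derives (l.yield.map Symbol.terminal ++ [Symbol.nonterminal r.root])
          (l.yield.map Symbol.terminal ++ r.yield.map Symbol.terminal) :=
        (ihr hvr).append_left _
      simpa [PT.yield, PT.root] using step.trans_derives (d1.trans d2)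

/-- Derivation with an explicit step count. -/
inductive DerN (g : ContextFreeGrammar T) :
    List (Symbol T g.NT) → List (Symbol T g.NT) → ℕ → Prop
  | refl (u : List (Symbol T g.NT)) : DerN g u u 0
  | head {u v w : List (Symbol T g.NT)} {n : ℕ} :
      g.Produces u v → DerN g v w n → DerN g u w (n + 1)

lemma derives_derN {u v : List (Symbol T g.NT)} (h : g.Derives u v) : ∃ n, DerN g u v n := by
  induction h using Relation.ReflTransGen.head_induction_on with
  | refl => exact ⟨0, DerN.refl _⟩
  | head hp _ ih => obtain ⟨n, hn⟩ := ih; exact ⟨n + 1, DerN.head hp hn⟩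

lemma split_cons {α : Type*} {u v p q : List α} {s : α} (h : u ++ v = p ++ s :: q) :
    (∃ q₁, u = p ++ s :: q₁ ∧ q = q₁ ++ v) ∨ (∃ p₁, p = u ++ p₁ ∧ v = p₁ ++ s :: q) := by
  rcases List.append_eq_append_iff.mp h with ⟨a', hp, hv⟩ | ⟨c', hu, hq⟩
  · exact Or.inr ⟨a', hp, hv⟩
  · cases c' with
    | nil => exact Or.inr ⟨[], by simpa using hu.symm, by simpa using hq.symm⟩
    | cons x xs =>
        simp only [List.cons_append, List.cons.injEq] at hq
        obtain ⟨rfl, rfl⟩ := hq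
        exact Or.inl ⟨xs, hu, rfl⟩

lemma DerN.split : ∀ {x : List (Symbol T g.NT)} {n : ℕ} (u v : List (Symbol T g.NT)),
    DerN g (u ++ v) x n →
    ∃ x₁ x₂ n₁ n₂, x = x₁ ++ x₂ ∧ n₁ + n₂ = n ∧ DerN g u x₁ n₁ ∧ DerN g v x₂ n₂ := by
  suffices H : ∀ (w x : List (Symbol T g.NT)) (n : ℕ), DerN g w x n →
      ∀ u v, w = u ++ v →
      ∃ x₁ x₂ n₁ n₂, x = x₁ ++ x₂ ∧ n₁ + n₂ = n ∧ DerN g u x₁ n₁ ∧ DerN g v x₂ n₂ by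
    intro x n u v h; exact H _ _ _ h u v rfl
  intro w x n h
  induction h with
  | refl => exact fun u v huv => ⟨u, v, 0, 0, huv, rfl, DerN.refl _, DerN.refl _⟩
  | @head w y x n hp _ ih =>
      rintro u v rfl
      obtain ⟨r, hr, hrw⟩ := hp
      obtain ⟨p, q, hin, hout⟩ := hrw.exists_parts
      rw [List.append_assoc, List.singleton_append] at hin
      rcases split_cons hin with ⟨q₁, hu, hq⟩ | ⟨p₁, hpq, hv⟩
      · -- the rewritten nonterminal lies in u
        have hy : y = (p ++ r.output ++ q₁) ++ v := by
          subst hq; simp [hout]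
        obtain ⟨x₁, x₂, n₁, n₂, hx, hn, h₁, h₂⟩ := ih _ _ hy
        have hpu : g.Produces u (p ++ r.output ++ q₁) := by
          refine ⟨r, hr, ?_⟩
          rw [hu, ← List.singleton_append, ← List.append_assoc]
          exact ContextFreeRule.rewrites_of_exists_parts r p q₁
        exact ⟨x₁, x₂, n₁ + 1, n₂, hx, by omega, DerN.head hpu h₁, h₂⟩
      · -- the rewritten nonterminal lies in v
        have hy : y = u ++ (p₁ ++ r.output ++ q) := by
          subst hpq; simp [hout]
        obtain ⟨x₁, x₂, n₁, n₂, hx, hn, h₁, h₂⟩ := ih _ _ hy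
        have hpv : g.Produces v (p₁ ++ r.output ++ q) := by
          refine ⟨r, hr, ?_⟩
          rw [hv, ← List.singleton_append, ← List.append_assoc]
          exact ContextFreeRule.rewrites_of_exists_parts r p₁ q
        exact ⟨x₁, x₂, n₁, n₂ + 1, hx, by omega, h₁, DerN.head hpv h₂⟩

lemma DerN.nil_eq {x : List (Symbol T g.NT)} {n : ℕ} (h : DerN g [] x n) : x = [] := by
  cases h with
  | refl => rfl
  | head hp _ =>
      obtain ⟨r, _, hrw⟩ := hp
      obtain ⟨p, q, hin, _⟩ := hrw.exists_parts
      simp at hin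

lemma DerN.terminal_eq {a : T} {x : List (Symbol T g.NT)} {n : ℕ}
    (h : DerN g [Symbol.terminal a] x n) : x = [Symbol.terminal a] := by
  cases h with
  | refl => rfl
  | head hp _ =>
      obtain ⟨r, _, hrw⟩ := hp
      obtain ⟨p, q, hin, _⟩ := hrw.exists_parts
      cases p with
      | nil => simp at hin
      | cons b bs => simp at hin

lemma derN_tree
    (hCNF : ∀ r ∈ g.rules,
      (∃ B C : g.NT, r.output = [Symbol.nonterminal B, Symbol.nonterminal C]) ∨
      (∃ a : T, r.output = [Symbol.terminal a]) ∨
      (r.input = g.initial ∧ r.output = [])) :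
    ∀ n (A : g.NT) (x : List (Symbol T g.NT)), DerN g [Symbol.nonterminal A] x n →
      ∀ w : List T, x = w.map Symbol.terminal →
      ∃ t : PT T g.NT, Valid g t ∧ t.root = A ∧ t.yield = w := by
  intro n
  induction n using Nat.strong_induction_on with
  | _ n ih =>
    intro A x h
    cases h with
    | refl =>
        intro w hw
        cases w with
        | nil => simp at hw
        | cons b bs => simp at hw
    | @head _ v _ m hp hder =>
        intro w hw
        subst hw
        obtain ⟨r, hr, hrw⟩ := hp
        obtain ⟨p, q, hin, hout⟩ := hrw.exists_parts
        obtain ⟨rfl, rfl, hinput⟩ : p = [] ∧ q = [] ∧ r.input = A := by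
          cases p with
          | nil =>
              simp only [List.nil_append, List.singleton_append, List.cons.injEq] at hin
              obtain ⟨h1, h2⟩ := hin
              exact ⟨rfl, h2.symm, (Symbol.nonterminal.injEq _ _ ▸ h1).symm⟩
          | cons c cs =>
              exfalso
              have := congrArg List.length hin
              simp [List.length_append] at this
        simp only [List.nil_append, List.append_nil] at hout
        subst hout
        rcases hCNF r hr with ⟨B, C, hBC⟩ | ⟨a, ha⟩ | ⟨_, hnil⟩
        · rw [hBC] at hder
          have hder' : DerN g ([Symbol.nonterminal B] ++ [Symbol.nonterminal C])
              (w.map Symbol.terminal) m := by simpa using hder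
          obtain ⟨x₁, x₂, n₁, n₂, hx, hn, h₁, h₂⟩ := DerN.split _ _ hder'
          obtain ⟨w₁, w₂, rfl, hw₁, hw₂⟩ := List.map_eq_append_iff.mp hx
          obtain ⟨t₁, hv₁, hr₁, hy₁⟩ := ih n₁ (by omega) B x₁ h₁ w₁ hw₁.symm
          obtain ⟨t₂, hv₂, hr₂, hy₂⟩ := ih n₂ (by omega) C x₂ h₂ w₂ hw₂.symm
          refine ⟨PT.node A t₁ t₂, ?_, rfl, by simp [PT.yield, hy₁, hy₂]⟩
          refine ⟨?_, hv₁, hv₂⟩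
          have hreq : r = ⟨A, [Symbol.nonterminal B, Symbol.nonterminal C]⟩ := by
            cases r; simp_all
          rw [hr₁, hr₂, ← hreq]
          exact hr
        · rw [ha] at hder
          have hx := hder.terminal_eq
          have hw : w = [a] := by cases w <;> simp_all
          refine ⟨PT.leaf A a, ?_, rfl, by simp [PT.yield, hw]⟩
          have hreq : r = ⟨A, [Symbol.terminal a]⟩ := by cases r; simp_all
          show (⟨A, [Symbol.terminal a]⟩ : ContextFreeRule T g.NT) ∈ g.rules
          rw [← hreq]; exact hr
        · rw [hnil] at hder
          have hx := hder.nil_eq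
          have hw : w = [] := by cases w <;> simp_all
          refine ⟨PT.eps A, ?_, rfl, by simp [PT.yield, hw]⟩
          have hreq : r = ⟨A, []⟩ := by cases r; simp_all
          show (⟨A, ([] : List (Symbol T g.NT))⟩ : ContextFreeRule T g.NT) ∈ g.rules
          rw [← hreq]; exact hr

open scoped Classical in
lemma shrink : ∀ (n : ℕ) (t : PT T g.NT), t.size ≤ n → Valid g t →
    ∃ t' : PT T g.NT, Valid g t' ∧ t'.root = t.root ∧ t'.yield.Sublist t.yield ∧
      t'.nts ⊆ t.nts ∧ Dist ∅ t' := by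
  intro n
  induction n with
  | zero => intro t ht _; exfalso; cases t <;> simp [PT.size] at ht
  | succ n ih =>
      intro t ht hv
      cases t with
      | leaf A a =>
          exact ⟨PT.leaf A a, hv, rfl, List.Sublist.refl _, subset_rfl, Finset.notMem_empty A⟩
      | eps A =>
          exact ⟨PT.eps A, hv, rfl, List.Sublist.refl _, subset_rfl, Finset.notMem_empty A⟩
      | node A l r =>
          obtain ⟨hrule, hvl, hvr⟩ := hv
          have hsl : l.size ≤ n := by simp only [PT.size] at ht; omega
          have hsr : r.size ≤ n := by simp only [PT.size] at ht; omega
          by_cases hA : A ∈ l.nts ∪ r.nts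
          · -- A repeats below: pump down
            obtain ⟨s, hsub, hroot⟩ : ∃ s : PT T g.NT,
                (Subt s l ∨ Subt s r) ∧ s.root = A := by
              rcases hA with h | h
              · obtain ⟨s, hs, hr'⟩ := PT.mem_nts_iff_subt h; exact ⟨s, Or.inl hs, hr'⟩
              · obtain ⟨s, hs, hr'⟩ := PT.mem_nts_iff_subt h; exact ⟨s, Or.inr hs, hr'⟩
            have hsize : s.size ≤ n := by
              rcases hsub with h | h
              · exact le_trans h.size_le hsl
              · exact le_trans h.size_le hsr
            have hvs : Valid g s := by
              rcases hsub with h | h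
              · exact subt_valid h hvl
              · exact subt_valid h hvr
            obtain ⟨t', h1, h2, h3, h4, h5⟩ := ih s hsize hvs
            refine ⟨t', h1, by rw [h2, hroot]; rfl, ?_, ?_, h5⟩
            · refine h3.trans ?_
              have hyl : PT.yield (PT.node A l r) = l.yield ++ r.yield := rfl
              rcases hsub with h | h
              · exact h.yield_sublist.trans (hyl ▸ List.sublist_append_left _ _)
              · exact h.yield_sublist.trans (hyl ▸ List.sublist_append_right _ _)
            · refine h4.trans ?_
              rcases hsub with h | h
              · exact h.nts_subset.trans (PT.nts_left_subset A l r)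
              · exact h.nts_subset.trans (PT.nts_right_subset A l r)
          · -- A does not occur below
            simp only [Set.mem_union, not_or] at hA
            obtain ⟨hAl, hAr⟩ := hA
            obtain ⟨t₁, hv₁, hr₁, hy₁, hn₁, hd₁⟩ := ih l hsl hvl
            obtain ⟨t₂, hv₂, hr₂, hy₂, hn₂, hd₂⟩ := ih r hsr hvr
            refine ⟨PT.node A t₁ t₂, ⟨by rw [hr₁, hr₂]; exact hrule, hv₁, hv₂⟩, rfl,
              ?_, ?_, ?_⟩
            · simpa [PT.yield] using hy₁.append hy₂
            · simp only [PT.nts]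
              intro x hx
              simp only [Set.mem_union, Set.mem_singleton_iff] at hx ⊢
              rcases hx with (hx | hx) | hx
              · exact Or.inl (Or.inl hx)
              · exact Or.inl (Or.inr (hn₁ hx))
              · exact Or.inr (hn₂ hx)
            · refine ⟨Finset.notMem_empty A, ?_, ?_⟩
              · exact PT.dist_insert t₁ ∅ (fun h => hAl (hn₁ h)) hd₁
              · exact PT.dist_insert t₂ ∅ (fun h => hAr (hn₂ h)) hd₂

end CnfSmallSubword

/-- a CFG in Chomsky normal form with `N` nonterminals generating `w`
also generates a scattered subword `w'` of `w` with `|w'| ≤ 2^N`. -/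
theorem cnf_small_subword {T : Type} (g : ContextFreeGrammar T) [Fintype g.NT]
    (N : ℕ) (hN : Fintype.card g.NT = N)
    (hCNF : ∀ r ∈ g.rules,
      (∃ B C : g.NT, r.output = [Symbol.nonterminal B, Symbol.nonterminal C]) ∨
      (∃ a : T, r.output = [Symbol.terminal a]) ∨
      (r.input = g.initial ∧ r.output = []))
    (w : List T) (hw : w ∈ g.language) :
    ∃ w' : List T, w' ∈ g.language ∧ w'.Sublist w ∧ w'.length ≤ 2 ^ N := by
  classical
  rw [ContextFreeGrammar.mem_language_iff] at hw
  obtain ⟨n, hder⟩ := CnfSmallSubword.derives_derN hw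
  obtain ⟨t, hvt, hroot, hyield⟩ := CnfSmallSubword.derN_tree hCNF n g.initial _ hder w rfl
  obtain ⟨t', hv', hr', hsub, -, hdist⟩ := CnfSmallSubword.shrink t.size t le_rfl hvt
  refine ⟨t'.yield, ?_, hyield ▸ hsub, ?_⟩
  · rw [ContextFreeGrammar.mem_language_iff]
    have := CnfSmallSubword.valid_derives t' hv'
    rwa [hr', hroot] at this
  · have := CnfSmallSubword.PT.yield_length_le t' ∅ hdist
    simpa [hN] using this
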